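/- On a path, in any sequence of rational swaps under strict preferences, if objects o_a and o_b with a < b both end strictly to the left of their initial positions (a' < a and b' < b) and Q = [a, a'] ∩ [b, b'] is nonempty, then every agent q in Q strictly prefers o_b to o_a. -/

import Mathlib

/-- An assignment maps agents to objects bijectively (agents and objects are both `Fin n`;
object `o_i` is identified with index `i`, agent `i` initially holds `o_i`). -/
abbrev Assignment (n : ℕ) := Equiv.Perm (Fin n)

/-- `u j o` is agent `j`'s utility for object `o`; strict linear preferences mean each `u j`
is injective, and `o ≻_j o'` iff `u j o > u j o'`. -/
def StrictPref {n : ℕ} (u : Fin n → Fin n → ℕ) : Prop := ∀ j, Function.Injective (u j)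

/-- A rational swap under strict preferences: two adjacent agents exchange objects, each
strictly preferring the object received. -/
def SwapStep {n : ℕ} (adj : Fin n → Fin n → Prop) (u : Fin n → Fin n → ℕ)
    (σ σ' : Assignment n) : Prop :=
  ∃ a b : Fin n, adj a b ∧ u a (σ b) > u a (σ a) ∧ u b (σ a) > u b (σ b) ∧
    σ' = σ * Equiv.swap a b

/-- `σseq 0, σseq 1, …, σseq t` is a sequence of swaps. -/
def SwapSeq {n : ℕ} (adj : Fin n → Fin n → Prop) (u : Fin n → Fin n → ℕ)
    (σseq : ℕ → Assignment n) (t : ℕ) : Prop :=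
  ∀ m < t, SwapStep adj u (σseq m) (σseq (m + 1))

/-- Adjacency of the path `0 – 1 – ⋯ – (n-1)`. -/
def pathAdj {n : ℕ} (i j : Fin n) : Prop := i.val + 1 = j.val ∨ j.val + 1 = i.val

lemma step_held {n : ℕ} (u : Fin n → Fin n → ℕ) {σ σ' : Assignment n}
    (h : SwapStep pathAdj u σ σ') (w : Fin n) : u w (σ w) ≤ u w (σ' w) := by
  obtain ⟨x, y, _, hx, hy, rfl⟩ := h
  rcases eq_or_ne w x with rfl | hwx
  · simpa [Equiv.Perm.mul_apply] using hx.le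
  rcases eq_or_ne w y with rfl | hwy
  · simpa [Equiv.Perm.mul_apply] using hy.le
  · simp [Equiv.Perm.mul_apply, Equiv.swap_apply_of_ne_of_ne hwx hwy]

lemma step_pos {n : ℕ} (u : Fin n → Fin n → ℕ) {σ σ' : Assignment n}
    (h : SwapStep pathAdj u σ σ') (o : Fin n) :
    (σ'⁻¹ o).val = (σ⁻¹ o).val ∨ (σ'⁻¹ o).val + 1 = (σ⁻¹ o).val ∨
      (σ⁻¹ o).val + 1 = (σ'⁻¹ o).val := by
  obtain ⟨x, y, hadj, _, _, rfl⟩ := h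
  have key : (σ * Equiv.swap x y)⁻¹ o = Equiv.swap x y (σ⁻¹ o) := by
    rw [mul_inv_rev, Equiv.swap_inv]; rfl
  rw [key]
  rcases hadj with hadj | hadj
  all_goals {
    rcases eq_or_ne (σ⁻¹ o) x with hx | hx
    · rw [hx, Equiv.swap_apply_left]; omega
    rcases eq_or_ne (σ⁻¹ o) y with hy | hy
    · rw [hy, Equiv.swap_apply_right]; omega
    · rw [Equiv.swap_apply_of_ne_of_ne hx hy]; omega }

lemma held_mono {n : ℕ} (u : Fin n → Fin n → ℕ)
    {t : ℕ} {σseq : ℕ → Assignment n} (hseq : SwapSeq pathAdj u σseq t)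
    (w : Fin n) (s1 s2 : ℕ) (h12 : s1 ≤ s2) (h2t : s2 ≤ t) :
    u w (σseq s1 w) ≤ u w (σseq s2 w) := by
  induction s2 with
  | zero => have : s1 = 0 := by omega
            simp [this]
  | succ k ih =>
    rcases Nat.lt_or_ge s1 (k+1) with h | h
    · exact le_trans (ih (by omega) (by omega)) (step_held u (hseq k (by omega)) w)
    · have : s1 = k + 1 := by omega
      simp [this]

lemma pos_contig {n : ℕ} {u : Fin n → Fin n → ℕ} (hu : StrictPref u)
    {t : ℕ} {σseq : ℕ → Assignment n} (hseq : SwapSeq pathAdj u σseq t)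
    (o : Fin n) (s1 s s2 : ℕ) (h1 : s1 ≤ s) (h2 : s ≤ s2) (h3 : s2 ≤ t)
    (heq : (((σseq s1)⁻¹) o).val = (((σseq s2)⁻¹) o).val) :
    (((σseq s)⁻¹) o).val = (((σseq s1)⁻¹) o).val := by
  have hfin : (σseq s1)⁻¹ o = (σseq s2)⁻¹ o := Fin.val_injective heq
  have e1 : σseq s1 ((σseq s1)⁻¹ o) = o := Equiv.apply_symm_apply _ _
  have e2 : σseq s2 ((σseq s1)⁻¹ o) = o := by
    rw [hfin]; exact Equiv.apply_symm_apply _ _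
  set w := (σseq s1)⁻¹ o with hw
  have m1 := held_mono u hseq w s1 s h1 (le_trans h2 h3)
  have m2 := held_mono u hseq w s s2 h2 h3
  rw [e1] at m1; rw [e2] at m2
  have : u w (σseq s w) = u w o := le_antisymm m2 m1
  have hso : σseq s w = o := hu w this
  have : (σseq s)⁻¹ o = w := by rw [← hso]; exact Equiv.symm_apply_apply _ _
  rw [this]

lemma nat_ivt (f : ℕ → ℕ) (s1 v : ℕ) :
    ∀ s2, s1 ≤ s2 → (∀ m, s1 ≤ m → m < s2 → f m ≤ f (m+1) + 1) →
      f s2 ≤ v → v ≤ f s1 → ∃ s, s1 ≤ s ∧ s ≤ s2 ∧ f s = v := by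
  intro s2
  induction s2 with
  | zero =>
    intro h1 _ h2 h3
    have h0 : s1 = 0 := by omega
    subst h0
    exact ⟨0, le_rfl, le_rfl, by omega⟩
  | succ k ih =>
    intro h1 hstep h2 h3
    rcases Nat.lt_or_ge k s1 with hk | hk
    · have : s1 = k + 1 := by omega
      subst this
      exact ⟨k+1, le_rfl, le_rfl, by omega⟩
    · rcases le_or_gt (f k) v with hfk | hfk
      · obtain ⟨s, hs1, hs2, hs3⟩ := ih hk (fun m hm1 hm2 => hstep m hm1 (by omega)) hfk h3
        exact ⟨s, hs1, by omega, hs3⟩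
      · have := hstep k hk (by omega)
        exact ⟨k+1, by omega, le_rfl, by omega⟩

lemma nat_mono (f : ℕ → ℕ) (t : ℕ)
    (hstep : ∀ m, m < t → f (m+1) = f m ∨ f (m+1) + 1 = f m ∨ f m + 1 = f (m+1))
    (hcontig : ∀ s1 s s2, s1 ≤ s → s ≤ s2 → s2 ≤ t → f s1 = f s2 → f s = f s1)
    (hend : f t < f 0) : ∀ m, m < t → f (m+1) ≤ f m := by
  classical
  by_contra hc
  push_neg at hc
  have hP : ∃ m, m < t ∧ f m < f (m+1) := by
    obtain ⟨m, h1, h2⟩ := hc; exact ⟨m, h1, h2⟩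
  set m := Nat.find hP with hmdef
  obtain ⟨hmt, hminc⟩ : m < t ∧ f m < f (m+1) := Nat.find_spec hP
  have hmin : ∀ k, k < m → k < t → f (k+1) ≤ f k := by
    intro k hk hkt
    have h := Nat.find_min hP hk
    push_neg at h
    exact h hkt
  have hstep1 : ∀ m', m' < t → f m' ≤ f (m'+1) + 1 := by
    intro m' h; rcases hstep m' h with h|h|h <;> omega
  have hfm1 : f (m+1) = f m + 1 := by
    rcases hstep m hmt with h|h|h <;> omega
  have hdec : ∀ l, l ≤ m → ∀ k, k ≤ l → f l ≤ f k := by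
    intro l
    induction l with
    | zero => intro _ k hk
              have : k = 0 := by omega
              simp [this]
    | succ i ih =>
      intro hl k hk
      rcases Nat.eq_or_lt_of_le hk with rfl | hk'
      · exact le_rfl
      · exact le_trans (hmin i (by omega) (by omega)) (ih (by omega) k (by omega))
  have claim1 : ∀ s, m + 1 ≤ s → s ≤ t → f m < f s := by
    by_contra hc1
    push_neg at hc1
    obtain ⟨s0, hs1, hs2, hs3⟩ := hc1
    obtain ⟨s, hsa, hsb, hsf⟩ :=
      nat_ivt f (m+1) (f m) s0 hs1 (fun m' h1 h2 => hstep1 m' (by omega)) hs3 (by omega)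
    have := hcontig m (m+1) s (Nat.le_succ m) hsa (le_trans hsb hs2) hsf.symm
    omega
  have hm0 : f m ≤ f 0 := hdec m le_rfl 0 (Nat.zero_le m)
  rcases eq_or_lt_of_le hm0 with heq | hlt
  · have := claim1 t (by omega) le_rfl
    omega
  · obtain ⟨m0, h1, h2, h3⟩ :=
      nat_ivt f 0 (f m + 1) m (Nat.zero_le m)
        (fun m' _ h => hstep1 m' (by omega)) (by omega) (by omega)
    have := hcontig m0 m (m+1) h2 (Nat.le_succ m) (by omega) (by omega)
    omega

/-- on a path, if `a < b`, both objects end strictly to the left of their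
initial positions (`a' < a`, `b' < b`), and `Q = [a,a'] ∩ [b,b']` is nonempty, then every
agent `q ∈ Q` strictly prefers `o_b` to `o_a`. -/
theorem intersect_both_left {n : ℕ}
    (u : Fin n → Fin n → ℕ) (hu : StrictPref u)
    (t : ℕ) (σseq : ℕ → Assignment n) (h0 : σseq 0 = 1)
    (hseq : SwapSeq pathAdj u σseq t)
    (a b : Fin n) (hab : a.val < b.val)
    (ha : (((σseq t)⁻¹) a).val < a.val) (hb : (((σseq t)⁻¹) b).val < b.val)
    (hQ : (Set.Icc (((σseq t)⁻¹) a).val a.val ∩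
            Set.Icc (((σseq t)⁻¹) b).val b.val).Nonempty) :
    ∀ q : Fin n,
      q.val ∈ Set.Icc (((σseq t)⁻¹) a).val a.val ∩ Set.Icc (((σseq t)⁻¹) b).val b.val →
      u q b > u q a := by
  classical
  intro q hq
  obtain ⟨hqa, hqb⟩ := hq
  rw [Set.mem_Icc] at hqa hqb
  obtain ⟨hq1, hq2⟩ := hqa
  obtain ⟨hq3, hq4⟩ := hqb
  have hab' : a ≠ b := fun h => by rw [h] at hab; exact lt_irrefl _ hab
  have hA0 : ((σseq 0)⁻¹) a = a := by rw [h0]; simp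
  have hB0 : ((σseq 0)⁻¹) b = b := by rw [h0]; simp
  have hstep1A : ∀ m, m < t →
      (((σseq m)⁻¹) a).val ≤ (((σseq (m+1))⁻¹) a).val + 1 := by
    intro m hm; rcases step_pos u (hseq m hm) a with h|h|h <;> omega
  have hstep1B : ∀ m, m < t →
      (((σseq m)⁻¹) b).val ≤ (((σseq (m+1))⁻¹) b).val + 1 := by
    intro m hm; rcases step_pos u (hseq m hm) b with h|h|h <;> omega
  have hmonoA : ∀ m, m < t →
      (((σseq (m+1))⁻¹) a).val ≤ (((σseq m)⁻¹) a).val := by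
    apply nat_mono (fun s => (((σseq s)⁻¹) a).val) t
    · intro m hm; exact step_pos u (hseq m hm) a
    · intro s1 s s2 h1 h2 h3 heq; exact pos_contig hu hseq a s1 s s2 h1 h2 h3 heq
    · simpa [hA0] using ha
  have hmonoB : ∀ m, m < t →
      (((σseq (m+1))⁻¹) b).val ≤ (((σseq m)⁻¹) b).val := by
    apply nat_mono (fun s => (((σseq s)⁻¹) b).val) t
    · intro m hm; exact step_pos u (hseq m hm) b
    · intro s1 s s2 h1 h2 h3 heq; exact pos_contig hu hseq b s1 s s2 h1 h2 h3 heq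
    · simpa [hB0] using hb
  have hABne : ∀ s : ℕ, (((σseq s)⁻¹) a).val ≠ (((σseq s)⁻¹) b).val := by
    intro s h
    exact hab' ((Equiv.injective _) (Fin.val_injective h))
  have hAB : ∀ s, s ≤ t → (((σseq s)⁻¹) a).val < (((σseq s)⁻¹) b).val := by
    intro s
    induction s with
    | zero => intro _; rw [hA0, hB0]; exact hab
    | succ k ih =>
      intro hk
      have h1 := hmonoA k (by omega)
      have h2 := hstep1B k (by omega)
      have h3 := ih (by omega)
      have h4 := hABne (k+1)
      omega
  obtain ⟨sb, _, hsbt, hsbq⟩ :=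
    nat_ivt (fun s => (((σseq s)⁻¹) b).val) 0 q.val t (Nat.zero_le t)
      (fun m _ hm => hstep1B m hm) hq3 (by simpa [hB0] using hq4)
  have hAsb : (((σseq sb)⁻¹) a).val < q.val := by
    have := hAB sb hsbt; omega
  obtain ⟨sa, _, hsasb, hsaq⟩ :=
    nat_ivt (fun s => (((σseq s)⁻¹) a).val) 0 q.val sb (Nat.zero_le sb)
      (fun m _ hm => hstep1A m (by omega)) (le_of_lt hAsb) (by simpa [hA0] using hq2)
  have hlt : sa < sb := by
    rcases Nat.eq_or_lt_of_le hsasb with rfl | h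
    · omega
    · exact h
  have hqa' : ((σseq sa)⁻¹) a = q := Fin.val_injective hsaq
  have hqb' : ((σseq sb)⁻¹) b = q := Fin.val_injective hsbq
  have ea : σseq sa q = a := by rw [← hqa']; exact Equiv.apply_symm_apply _ _
  have eb : σseq sb q = b := by rw [← hqb']; exact Equiv.apply_symm_apply _ _
  have hle := held_mono u hseq q sa sb (le_of_lt hlt) hsbt
  rw [ea, eb] at hle
  have hne : u q a ≠ u q b := fun h => hab' (hu q h)
  exact lt_of_le_of_ne hle hne
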